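/- Let p ≥ 3 be a prime, e ≥ 1, and consider the polynomial f = X₀² + X₁² + X₂^m over a field of characteristic p, with m ≥ 2. The coefficient of the monomial X₀^{p^e−3} X₁^{p^e−1} X₂^m in the multinomial expansion of f^{p^e−1} is C(p^e−1, (p^e−3)/2) · ((p^e+1)/2) modulo p, and this is nonzero modulo p. -/

import Mathlib

open MvPolynomial

theorem aux_not_dvd_choose_pred (p : ℕ) (hp : p.Prime) (k : ℕ) (hk : k ≤ p - 1) :
    ¬ p ∣ (p-1).choose k := by
  induction k with
  | zero => simp [hp.one_lt.ne', Nat.dvd_one]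
  | succ k ih =>
    have hk' : k ≤ p - 1 := by omega
    have key := Nat.choose_succ_right_eq (p-1) k
    intro hdvd
    have : p ∣ (p-1).choose k * (p - 1 - k) := key ▸ Dvd.dvd.mul_right hdvd (k+1)
    rcases (Nat.Prime.dvd_mul hp).mp this with h | h
    · exact ih hk' h
    · have := Nat.le_of_dvd (by omega) h
      omega

theorem aux_div_pow (p e i : ℕ) (hp : 1 < p) (hi : i < e) :
    (p ^ e - 1) / p ^ i = p ^ (e - i) - 1 := by
  have h1 : p ^ e = p ^ (e - i) * p ^ i := by rw [← pow_add]; congr 1; omega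
  have h2 : 1 ≤ p ^ i := Nat.one_le_pow _ _ (by omega)
  have h3 : 1 ≤ p ^ (e - i) := Nat.one_le_pow _ _ (by omega)
  have h4 : (p ^ (e - i) - 1) * p ^ i = p ^ (e - i) * p ^ i - p ^ i := Nat.sub_one_mul _ _
  have h5 : p ^ i ≤ p ^ (e - i) * p ^ i := Nat.le_mul_of_pos_left _ (by omega)
  refine Nat.div_eq_of_lt_le (by omega) (by rw [Nat.sub_add_cancel h3]; omega)

theorem aux_not_dvd_choose_pow (p : ℕ) (hp : p.Prime) (e k : ℕ) (hk : k ≤ p ^ e - 1) :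
    ¬ p ∣ (p ^ e - 1).choose k := by
  have : Fact p.Prime := ⟨hp⟩
  have hp1 : 1 < p := hp.one_lt
  have hpe : 1 ≤ p ^ e := Nat.one_le_pow _ _ (by omega)
  have hpee : p ^ e - 1 < p ^ e := by omega
  have hmod := Choose.choose_modEq_prod_range_choose_nat (p := p) (n := p^e - 1) (k := k)
    (a := e) hpee (by omega)
  intro hdvd
  have hnd : ¬ p ∣ ∏ i ∈ Finset.range e, ((p ^ e - 1) / p ^ i % p).choose (k / p ^ i % p) := by
    rw [Prime.dvd_finset_prod_iff hp.prime]
    rintro ⟨i, hi, hdi⟩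
    rw [Finset.mem_range] at hi
    rw [aux_div_pow p e i hp1 hi] at hdi
    have h3 : 1 ≤ p ^ (e - i) := Nat.one_le_pow _ _ (by omega)
    have hmm : (p ^ (e - i) - 1) % p = p - 1 := by
      have he1 : p ^ (e - i) = p ^ (e - i - 1) * p := by rw [← pow_succ]; congr 1; omega
      rw [he1]
      have h4 : 1 ≤ p ^ (e - i - 1) := Nat.one_le_pow _ _ (by omega)
      have h6 : (p ^ (e - i - 1) - 1) * p = p ^ (e - i - 1) * p - p := Nat.sub_one_mul _ _
      have h7 : p ≤ p ^ (e - i - 1) * p := Nat.le_mul_of_pos_left _ (by omega)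
      have h5 : p ^ (e - i - 1) * p - 1 = (p ^ (e - i - 1) - 1) * p + (p - 1) := by omega
      rw [h5, add_comm, Nat.add_mul_mod_self_right, Nat.mod_eq_of_lt (by omega)]
    rw [hmm] at hdi
    have hlt := Nat.mod_lt (k / p ^ i) (show 0 < p by omega)
    exact aux_not_dvd_choose_pred p hp _ (by omega) hdi
  exact hnd (Nat.modEq_zero_iff_dvd.mp (hmod.symm.trans (Nat.modEq_zero_iff_dvd.mpr hdvd)))

theorem aux_expand {K : Type*} [CommSemiring K] (m n : ℕ) :
    ((X 0 ^ 2 + X 1 ^ 2 + X 2 ^ m : MvPolynomial (Fin 3) K) ^ n)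
      = ∑ k ∈ Finset.range (n+1), ∑ j ∈ Finset.range (k+1),
        monomial (Finsupp.single 0 (2*j) + Finsupp.single 1 (2*(k-j)) + Finsupp.single 2 (m*(n-k)))
          ((n.choose k * k.choose j : ℕ) : K) := by
  rw [add_pow]
  refine Finset.sum_congr rfl fun k hk => ?_
  rw [add_pow, Finset.sum_mul, Finset.sum_mul]
  refine Finset.sum_congr rfl fun j hj => ?_
  simp only [X_pow_eq_monomial, monomial_pow, one_pow, Finsupp.smul_single, smul_eq_mul,
    ← C_eq_coe_nat, C_apply, monomial_mul]
  rw [mul_comm 2 j, mul_comm 2 (k-j), mul_comm m (n-k)]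
  congr 1
  · simp
  · push_cast; ring

/-- For a prime `p ≥ 3`, `e ≥ 1`, `m ≥ 2` and `f = X₀² + X₁² + X₂^m` over a field of
characteristic `p`, the coefficient of `X₀^{p^e-3} X₁^{p^e-1} X₂^m` in `f^{p^e-1}` is
`C(p^e-1, (p^e-3)/2)·((p^e+1)/2)` modulo `p`, and this is nonzero modulo `p`. -/
theorem stmt18 {K : Type*} [Field K] (p : ℕ) (hp : p.Prime) (hp3 : 3 ≤ p) [CharP K p]
    (e : ℕ) (he : 1 ≤ e) (m : ℕ) (hm : 2 ≤ m) :
    MvPolynomial.coeff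
        (Finsupp.single (0 : Fin 3) (p ^ e - 3) + Finsupp.single 1 (p ^ e - 1)
          + Finsupp.single 2 m)
        ((X 0 ^ 2 + X 1 ^ 2 + X 2 ^ m : MvPolynomial (Fin 3) K) ^ (p ^ e - 1)) =
      ((Nat.choose (p ^ e - 1) ((p ^ e - 3) / 2) * ((p ^ e + 1) / 2) : ℕ) : K) ∧
    ((Nat.choose (p ^ e - 1) ((p ^ e - 3) / 2) * ((p ^ e + 1) / 2) : ℕ) : K) ≠ 0 := by
  have hq3 : 3 ≤ p ^ e := le_trans hp3 (Nat.le_self_pow (by omega) p)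
  have hodd : p ^ e % 2 = 1 := by
    obtain ⟨c, hc⟩ := (hp.odd_of_ne_two (by omega)).pow (n := e)
    omega
  set q := p ^ e with hq
  set n := q - 1 with hn
  set a := (q - 3) / 2 with ha
  have ha2 : 2 * a = q - 3 := by omega
  constructor
  · rw [aux_expand m n]
    simp only [MvPolynomial.coeff_sum, coeff_monomial]
    rw [Finset.sum_eq_single_of_mem (n-1) (by simp only [Finset.mem_range]; omega)]
    · rw [Finset.sum_eq_single_of_mem a (by simp only [Finset.mem_range]; omega)]
      · rw [if_pos]
        · -- value equality
          have hcs : n.choose (n-1) = n := by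
            rw [Nat.choose_symm (by omega), Nat.choose_one_right]
          rw [hcs]
          congr 1
          have c1 : q - 2 + 1 = q - 1 := by omega
          have hA := Nat.add_one_mul_choose_eq (q - 2) a
          rw [c1] at hA
          have hB := Nat.choose_succ_right_eq (q - 1) a
          have hC : q - 1 - a = (q + 1) / 2 := by omega
          calc n * (n-1).choose a = (q - 1) * (q-2).choose a := by rw [hn, show q-1-1 = q-2 by omega]
            _ = (q-1).choose (a+1) * (a+1) := hA
            _ = (q-1).choose a * (q - 1 - a) := hB
            _ = (q-1).choose a * ((q+1)/2) := by rw [hC]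
        · -- index equality
          rw [show 2*a = q - 3 from ha2,
            show 2*((n-1)-a) = q - 1 by omega,
            show n - (n-1) = 1 by omega, mul_one]
      · -- inner: other j give 0
        intro j hj hja
        rw [if_neg]
        intro hEq
        have h0 := DFunLike.congr_fun hEq 0
        simp [Finsupp.single_apply] at h0
        omega
    · -- outer: other k give 0
      intro k hk hkn
      refine Finset.sum_eq_zero fun j hj => ?_
      rw [if_neg]
      intro hEq
      have h2 := DFunLike.congr_fun hEq 2
      simp [Finsupp.single_apply] at h2
      rw [Finset.mem_range] at hk
      have : n - k = 1 := by
        rcases Nat.lt_or_ge 1 (n - k) with h | h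
        · nlinarith
        · interval_cases h' : n - k <;> omega
      omega
  · -- nonzero
    intro h0
    rw [CharP.cast_eq_zero_iff K p] at h0
    rcases (Nat.Prime.dvd_mul hp).mp h0 with h | h
    · exact aux_not_dvd_choose_pow p hp e a (by omega) h
    · have h1 : p ∣ q + 1 := by
        have := Dvd.dvd.mul_right h 2
        rwa [show (q+1)/2*2 = q + 1 by omega] at this
      have h2 : p ∣ q := dvd_pow_self p (by omega)
      have := Nat.dvd_sub h1 h2
      simp only [show q + 1 - q = 1 by omega, Nat.dvd_one] at this
      omega
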